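/- arXiv:1609.00084 — 2 statements merged into one kernel-verified Lean document; each statement's English description precedes it below -/
import Mathlib

section
/- (Perturbation of zeros) Let f and g be entire functions, B, ρ ≥ 1. Suppose f has at most M > 0 zeros (with multiplicity) in the disk D(0, 2Bρ), let 0 < γ < ρ/(2M), and assume max_{|z|≤2Bρ}|g(z)| < min{|f(z)| : z ∈ D(0,2Bρ), dist(z, zeros of f in D(0,2Bρ)) ≥ γ}. Then for every ρ′ ∈ (2Mγ, 2Bρ − 2Mγ), n_{f+g}(ρ′ − 2Mγ) ≤ n_f(ρ′) ≤ n_{f+g}(ρ′ + 2Mγ), where n_h(t) denotes the number of zeros of h in the closed disk of radius t. -/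
open Metric

/-- The number of zeros (with multiplicity) of an entire function `f` in a set `s`,
as a value in `ENNReal`: the sum over the points of `s` of the vanishing order of `f`. -/
noncomputable def zeroCount (f : ℂ → ℂ) (hf : Differentiable ℂ f) (s : Set ℂ) : ENNReal :=
  ∑' z : s, (analyticOrderAt f z).toENNReal

open Complex Filter Topology Classical ENNReal

namespace ZP
variable {f f₁ : ℂ → ℂ} {a z z₀ : ℂ} {s t : Set ℂ}

lemma order_eq_zero_iff (hf : AnalyticAt ℂ f z) : analyticOrderAt f z = 0 ↔ f z ≠ 0 := by
  constructor
  · intro h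
    obtain ⟨g, hg, hgz, hfg⟩ := (hf.analyticOrderAt_eq_natCast (n := 0)).mp (by exact_mod_cast h)
    have : f z = g z := by simpa using hfg.self_of_nhds
    rw [this]; exact hgz
  · intro h
    rw [show ((0:ℕ∞)) = ((0:ℕ):ℕ∞) by rfl, hf.analyticOrderAt_eq_natCast]
    exact ⟨f, hf, h, by simp⟩

lemma order_factor (hf₁ : Differentiable ℂ f₁) (a : ℂ)
    (hf : Differentiable ℂ (fun z => (z - a) * f₁ z)) (z : ℂ) :
    analyticOrderAt (fun z => (z - a) * f₁ z) z
      = analyticOrderAt f₁ z + (if z = a then 1 else 0) := by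
  by_cases ht : analyticOrderAt f₁ z = ⊤
  · rw [ht, top_add]
    rw [analyticOrderAt_eq_top] at ht ⊢
    filter_upwards [ht] with w hw; simp [hw]
  · obtain ⟨n, hn⟩ : ∃ m : ℕ, analyticOrderAt f₁ z = m := ⟨_, (ENat.coe_toNat ht).symm⟩
    obtain ⟨g, hg, hgz, hfg⟩ := ((hf₁.analyticAt z).analyticOrderAt_eq_natCast (n := n)).mp hn
    rw [hn]
    by_cases hza : z = a
    · subst hza
      have : analyticOrderAt (fun w => (w - z) * f₁ w) z = ((n+1 : ℕ) : ℕ∞) := by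
        rw [(hf.analyticAt z).analyticOrderAt_eq_natCast]
        refine ⟨g, hg, hgz, ?_⟩
        filter_upwards [hfg] with w hw
        simp only [smul_eq_mul] at hw ⊢
        rw [hw]; ring
      rw [this]; simp [Nat.cast_add]
    · have : analyticOrderAt (fun z => (z - a) * f₁ z) z = ((n : ℕ) : ℕ∞) := by
        rw [(hf.analyticAt z).analyticOrderAt_eq_natCast]
        refine ⟨fun w => (w - a) * g w, ((differentiable_id.sub_const a).analyticAt z).mul hg,
          by simp [sub_ne_zero.mpr hza, hgz], ?_⟩
        filter_upwards [hfg] with w hw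
        simp only [smul_eq_mul] at hw ⊢
        rw [hw]; ring
      rw [this]; simp [hza]

lemma zeroCount_mono (hf : Differentiable ℂ f) (hst : s ⊆ t) :
    zeroCount f hf s ≤ zeroCount f hf t := by
  rw [zeroCount, zeroCount,
    tsum_subtype s (fun w => (analyticOrderAt f w).toENNReal),
    tsum_subtype t (fun w => (analyticOrderAt f w).toENNReal)]
  exact ENNReal.tsum_le_tsum fun z =>
    Set.indicator_le_indicator_of_subset hst (fun _ => zero_le) z

lemma zeroCount_factor (hf₁ : Differentiable ℂ f₁) (a : ℂ)
    (hf : Differentiable ℂ (fun z => (z - a) * f₁ z)) (s : Set ℂ) :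
    zeroCount (fun z => (z - a) * f₁ z) hf s
      = zeroCount f₁ hf₁ s + (if a ∈ s then 1 else 0) := by
  rw [zeroCount, zeroCount]
  have h1 : ∀ z : s, (analyticOrderAt (fun z => (z - a) * f₁ z) z).toENNReal
      = (analyticOrderAt f₁ z).toENNReal + (if (z : ℂ) = a then 1 else 0) := by
    intro z
    rw [order_factor hf₁ a hf z]
    split_ifs with h <;> simp [h]
  rw [tsum_congr h1, ENNReal.tsum_add]
  congr 1
  by_cases ha : a ∈ s
  · rw [tsum_eq_single (⟨a, ha⟩ : s), if_pos rfl, if_pos ha]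
    intro b hb
    rw [if_neg (fun hba => hb (Subtype.ext hba))]
  · rw [if_neg ha]
    convert tsum_zero with b
    rw [if_neg (fun hba => ha (by rw [← hba]; exact b.2))]

lemma toENNReal_eq_zero {m : ℕ∞} : m.toENNReal = 0 ↔ m = 0 := by
  exact ENat.toENNReal_eq_zero

lemma not_eventually_zero (hf : Differentiable ℂ f) (h0 : f z₀ ≠ 0) (z : ℂ) :
    ¬ (∀ᶠ w in 𝓝 z, f w = 0) := by
  intro h
  have hA : AnalyticOnNhd ℂ f Set.univ := fun w _ => hf.analyticAt w
  have := hA.eqOn_zero_of_preconnected_of_eventuallyEq_zero isPreconnected_univ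
    (Set.mem_univ z) h (Set.mem_univ z₀)
  exact h0 this

lemma order_ne_top (hf : Differentiable ℂ f) (h0 : f z₀ ≠ 0) (z : ℂ) :
    analyticOrderAt f z ≠ ⊤ :=
  fun h => not_eventually_zero hf h0 z (analyticOrderAt_eq_top.mp h)

lemma finite_zeros (hf : Differentiable ℂ f) (h0 : f z₀ ≠ 0) {K : Set ℂ} (hK : IsCompact K) :
    {z | z ∈ K ∧ f z = 0}.Finite := by
  by_contra hinf
  have hinf' : {z | z ∈ K ∧ f z = 0}.Infinite := hinf
  obtain ⟨x, -, hx⟩ := hinf'.exists_accPt_of_subset_isCompact hK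
    (fun z hz => hz.1)
  rw [accPt_iff_frequently] at hx
  have hfreq : ∃ᶠ y in 𝓝[≠] x, f y = 0 := by
    rw [frequently_nhdsWithin_iff]
    exact hx.mono fun y hy => ⟨hy.2.2, hy.1⟩
  have := (hf.analyticAt x).frequently_zero_iff_eventually_zero.1 hfreq
  exact not_eventually_zero hf h0 x this

lemma zeroCount_eq_zero_iff (hf : Differentiable ℂ f) :
    zeroCount f hf s = 0 ↔ ∀ z ∈ s, f z ≠ 0 := by
  rw [zeroCount, ENNReal.tsum_eq_zero]
  constructor
  · intro h z hz
    have := h ⟨z, hz⟩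
    rw [toENNReal_eq_zero] at this
    exact (order_eq_zero_iff (hf.analyticAt z)).mp this
  · intro h z
    rw [toENNReal_eq_zero]
    exact (order_eq_zero_iff (hf.analyticAt z)).mpr (h z z.2)

lemma zeroCount_exists_nat (hf : Differentiable ℂ f) (h0 : f z₀ ≠ 0) {K : Set ℂ}
    (hK : IsCompact K) : ∃ N : ℕ, zeroCount f hf K = N := by
  classical
  have hfin := finite_zeros hf h0 hK
  have hsupp : ∀ z : ℂ, z ∉ hfin.toFinset → K.indicator
      (fun z => (analyticOrderAt f z).toENNReal) z = 0 := by
    intro z hz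
    rw [Set.Finite.mem_toFinset] at hz
    by_cases hzK : z ∈ K
    · rw [Set.indicator_of_mem hzK, toENNReal_eq_zero]
      exact (order_eq_zero_iff (hf.analyticAt z)).mpr (fun h => hz ⟨hzK, h⟩)
    · exact Set.indicator_of_notMem hzK _
  refine ⟨∑ z ∈ hfin.toFinset, (analyticOrderAt f z).toNat, ?_⟩
  rw [zeroCount, tsum_subtype K (fun w => (analyticOrderAt f w).toENNReal),
    tsum_eq_sum hsupp, Nat.cast_sum]
  refine Finset.sum_congr rfl fun z hz => ?_
  rw [Set.Finite.mem_toFinset] at hz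
  rw [Set.indicator_of_mem hz.1]
  rw [← ENat.coe_toNat (order_ne_top hf h0 z)]
  simp


lemma deriv_differentiable {f : ℂ → ℂ} (hf : Differentiable ℂ f) :
    Differentiable ℂ (deriv f) := by
  have h : AnalyticOnNhd ℂ f Set.univ := fun w _ => hf.analyticAt w
  exact differentiableOn_univ.mp h.deriv.differentiableOn

lemma exists_factor {f : ℂ → ℂ} {a : ℂ} (hf : Differentiable ℂ f) (ha : f a = 0) :
    ∃ f₁ : ℂ → ℂ, Differentiable ℂ f₁ ∧ ∀ z, f z = (z - a) * f₁ z := by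
  refine ⟨dslope f a, ?_, ?_⟩
  · intro z
    rcases eq_or_ne z a with rfl|hz
    · obtain ⟨p, hp⟩ := hf.analyticAt z
      exact hp.has_fpower_series_dslope_fslope.analyticAt.differentiableAt
    · exact (differentiableAt_dslope_of_ne hz).mpr (hf z)
  · intro z
    have h := sub_smul_dslope f a z
    rw [ha, sub_zero] at h
    rw [← h, smul_eq_mul]

lemma argument_principle (N : ℕ) : ∀ (f : ℂ → ℂ) (hf : Differentiable ℂ f) (r : ℝ), 0 < r →
    (∀ z ∈ sphere (0:ℂ) r, f z ≠ 0) → zeroCount f hf (closedBall 0 r) = N →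
    (∮ z in C(0, r), deriv f z / f z) = 2 * Real.pi * Complex.I * N := by
  induction N with
  | zero =>
    intro f hf r hr hsph hcnt
    have hball : ∀ z ∈ closedBall (0:ℂ) r, f z ≠ 0 :=
      (zeroCount_eq_zero_iff hf).mp (by exact_mod_cast hcnt)
    have hdiff : ∀ z ∈ closedBall (0:ℂ) r, DifferentiableAt ℂ (fun w => deriv f w / f w) z :=
      fun z hz => ((deriv_differentiable hf) z).div (hf z) (hball z hz)
    rw [circleIntegral_eq_zero_of_differentiable_on_off_countable hr.le
      Set.countable_empty (fun z hz => (hdiff z hz).continuousAt.continuousWithinAt)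
      (fun z hz => hdiff z (ball_subset_closedBall hz.1))]
    simp
  | succ N ih =>
    intro f hf r hr hsph hcnt
    obtain ⟨a, haK, ha⟩ : ∃ a ∈ closedBall (0:ℂ) r, f a = 0 := by
      by_contra hne
      push_neg at hne
      rw [(zeroCount_eq_zero_iff hf).mpr hne] at hcnt
      exact (Nat.cast_ne_zero.mpr (Nat.succ_ne_zero N)) hcnt.symm
    obtain ⟨f₁, hf₁, heq⟩ := exists_factor hf ha
    have hfeq : f = fun z => (z - a) * f₁ z := funext heq
    subst hfeq
    have haball : a ∈ ball (0:ℂ) r := by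
      rcases lt_or_eq_of_le (mem_closedBall.mp haK) with h|h
      · exact mem_ball.mpr h
      · exact absurd ha (hsph a (mem_sphere.mpr h))
    have hsph₁ : ∀ z ∈ sphere (0:ℂ) r, f₁ z ≠ 0 := by
      intro z hz hz0
      exact hsph z hz (by simp [hz0])
    have hzne : ∀ z ∈ sphere (0:ℂ) r, z ≠ a := by
      intro z hz hza
      exact hsph z hz (by simp [hza])
    have hcnt₁ : zeroCount f₁ hf₁ (closedBall 0 r) = N := by
      have h2 := zeroCount_factor hf₁ a ((differentiable_id.sub_const a).mul hf₁)
        (closedBall 0 r)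
      rw [hcnt, if_pos haK] at h2
      have : zeroCount f₁ hf₁ (closedBall 0 r) + 1 = (N : ENNReal) + 1 := by
        rw [← h2]; push_cast; ring
      exact (ENNReal.add_left_inj ENNReal.one_ne_top).mp this
    have hIH := ih f₁ hf₁ r hr hsph₁ hcnt₁
    set φ : ℂ → ℂ := fun z => deriv f₁ z / f₁ z with hφ
    have hφcont : ContinuousOn φ (sphere (0:ℂ) r) := by
      exact ((deriv_differentiable hf₁).continuous.continuousOn).div
        hf₁.continuous.continuousOn hsph₁
    have hAcont : ContinuousOn (fun z => (z - a)⁻¹ + φ z) (sphere (0:ℂ) r) := by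
      refine ContinuousOn.add ?_ hφcont
      exact ContinuousOn.inv₀ (by fun_prop) (fun z hz => sub_ne_zero.mpr (hzne z hz))
    have hAint : CircleIntegrable (fun z => (z - a)⁻¹ + φ z) 0 r :=
      hAcont.circleIntegrable hr.le
    have hBint : CircleIntegrable φ 0 r := hφcont.circleIntegrable hr.le
    have hEq : Set.EqOn (fun z => deriv (fun w => (w - a) * f₁ w) z / ((z - a) * f₁ z))
        (fun z => (z - a)⁻¹ + φ z) (sphere (0:ℂ) r) := by
      intro z hz
      have hd : deriv (fun w => (w - a) * f₁ w) z = f₁ z + (z - a) * deriv f₁ z := by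
        have h1 : HasDerivAt (fun w => (w - a) * f₁ w)
            (1 * f₁ z + (z - a) * deriv f₁ z) z :=
          ((hasDerivAt_id z).sub_const a).mul (hf₁ z).hasDerivAt
        rw [h1.deriv]; ring
      simp only [hd, hφ]
      have h1 : z - a ≠ 0 := sub_ne_zero.mpr (hzne z hz)
      have h2 : f₁ z ≠ 0 := hsph₁ z hz
      field_simp
    calc (∮ z in C(0, r), deriv (fun w => (w - a) * f₁ w) z / ((z - a) * f₁ z))
        = ∮ z in C(0, r), ((z - a)⁻¹ + φ z) := circleIntegral.integral_congr hr.le hEq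
      _ = (∮ z in C(0, r), (((z - a)⁻¹ + φ z) - φ z)) + ∮ z in C(0, r), φ z := by
          rw [circleIntegral.integral_sub hAint hBint]; ring
      _ = (∮ z in C(0, r), (z - a)⁻¹) + ∮ z in C(0, r), φ z := by
          congr 1
          refine circleIntegral.integral_congr hr.le fun z hz => ?_
          simp
      _ = 2 * Real.pi * Complex.I * (N+1 : ℕ) := by
          rw [circleIntegral.integral_sub_inv_of_mem_ball haball, hIH]
          push_cast; ring

lemma rouche {f g : ℂ → ℂ} (hf : Differentiable ℂ f) (hg : Differentiable ℂ g)
    (hfg : Differentiable ℂ (f + g)) {r : ℝ} (hr : 0 < r)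
    (hlt : ∀ z ∈ sphere (0:ℂ) r, ‖g z‖ < ‖f z‖) :
    zeroCount (f + g) hfg (closedBall 0 r) = zeroCount f hf (closedBall 0 r) := by
  have hfs : ∀ z ∈ sphere (0:ℂ) r, f z ≠ 0 := by
    intro z hz h0
    have h1 : ‖g z‖ < 0 := by simpa [h0] using hlt z hz
    exact (norm_nonneg _).not_gt h1
  have hfgs : ∀ z ∈ sphere (0:ℂ) r, (f + g) z ≠ 0 := by
    intro z hz h0
    have h1 : f z = - g z := by
      have h2 : f z + g z = 0 := h0
      linear_combination h2
    have h3 := hlt z hz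
    rw [h1, norm_neg] at h3
    exact lt_irrefl _ h3
  have hz₀ : (r : ℂ) ∈ sphere (0:ℂ) r := by
    simp [abs_of_pos hr]
  obtain ⟨N, hN⟩ := zeroCount_exists_nat hf (hfs _ hz₀) (isCompact_closedBall (0:ℂ) r)
  obtain ⟨N', hN'⟩ := zeroCount_exists_nat hfg (hfgs _ hz₀) (isCompact_closedBall (0:ℂ) r)
  rw [hN, hN']
  have hAPf := argument_principle N f hf r hr hfs hN
  have hAPfg := argument_principle N' (f + g) hfg r hr hfgs hN'
  -- the two contour integrals agree
  have hkey : (∮ z in C(0, r), deriv (f + g) z / (f + g) z)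
      = ∮ z in C(0, r), deriv f z / f z := by
    set U : Set ℂ := {z | ‖g z‖ < ‖f z‖} with hU
    have hUopen : IsOpen U := isOpen_lt hg.continuous.norm hf.continuous.norm
    have hfU : ∀ z ∈ U, f z ≠ 0 := by
      intro z hz h0
      have hz' : ‖g z‖ < ‖f z‖ := hz
      rw [h0, norm_zero] at hz'
      exact (norm_nonneg _).not_gt hz'
    have hfgU : ∀ z ∈ U, f z + g z ≠ 0 := by
      intro z hz h0
      have hz' : ‖g z‖ < ‖f z‖ := hz
      have h1 : g z = - f z := by linear_combination h0
      rw [h1, norm_neg] at hz'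
      exact lt_irrefl _ hz'
    set ψ : ℂ → ℂ := fun z => deriv (f + g) z / (f + g) z - deriv f z / f z with hψ
    set φ : ℂ → ℂ := fun z => Complex.log (1 + g z / f z) with hφ
    have hder : ∀ z ∈ U, HasDerivAt φ (ψ z) z := by
      intro z hz
      have hfz : f z ≠ 0 := hfU z hz
      have hfgz : f z + g z ≠ 0 := hfgU z hz
      have hslit : 1 + g z / f z ∈ Complex.slitPlane := by
        apply Complex.mem_slitPlane_of_norm_lt_one
        rw [norm_div, div_lt_one (norm_pos_iff.mpr hfz)]
        exact hz
      have hlog := (Complex.hasStrictDerivAt_log hslit).hasDerivAt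
      have hdiv : HasDerivAt (fun w => 1 + g w / f w)
          ((deriv g z * f z - g z * deriv f z) / (f z) ^ 2) z :=
        (((hg z).hasDerivAt.div (hf z).hasDerivAt hfz)).const_add 1
      have hcomp := hlog.comp z hdiv
      have hval : (1 + g z / f z)⁻¹ * ((deriv g z * f z - g z * deriv f z) / (f z) ^ 2)
          = ψ z := by
        have hd : deriv (f + g) z = deriv f z + deriv g z :=
          ((hf z).hasDerivAt.add (hg z).hasDerivAt).deriv
        rw [hψ]
        simp only [hd, Pi.add_apply]
        field_simp
        ring
      rw [hval] at hcomp
      exact hcomp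
    have hsphU : ∀ θ : ℝ, circleMap 0 r θ ∈ U := fun θ =>
      hlt _ (circleMap_mem_sphere (0:ℂ) hr.le θ)
    -- the integral of ψ over the circle vanishes
    have hψ0 : (∮ z in C(0, r), ψ z) = 0 := by
      have hFderiv : ∀ θ : ℝ, HasDerivAt (φ ∘ circleMap 0 r)
          (ψ (circleMap 0 r θ) * (circleMap 0 r θ * Complex.I)) θ := fun θ =>
        (hder _ (hsphU θ)).comp θ (hasDerivAt_circleMap 0 r θ)
      have hcont : Continuous fun θ : ℝ =>
          ψ (circleMap 0 r θ) * (circleMap 0 r θ * Complex.I) := by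
        have hγ : Continuous (circleMap 0 r) := continuous_circleMap 0 r
        have h1 : Continuous fun θ : ℝ => deriv (f + g) (circleMap 0 r θ) /
            (f + g) (circleMap 0 r θ) := by
          refine Continuous.div (((deriv_differentiable hfg).continuous).comp hγ)
            ((hfg.continuous).comp hγ) fun θ => ?_
          exact hfgs _ (circleMap_mem_sphere (0:ℂ) hr.le θ)
        have h2 : Continuous fun θ : ℝ => deriv f (circleMap 0 r θ) /
            f (circleMap 0 r θ) := by
          refine Continuous.div (((deriv_differentiable hf).continuous).comp hγ)
            ((hf.continuous).comp hγ) fun θ => ?_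
          exact hfs _ (circleMap_mem_sphere (0:ℂ) hr.le θ)
        exact ((h1.sub h2).mul (hγ.mul continuous_const))
      have hint := intervalIntegral.integral_eq_sub_of_hasDerivAt
        (f := φ ∘ circleMap 0 r)
        (f' := fun θ => ψ (circleMap 0 r θ) * (circleMap 0 r θ * Complex.I))
        (a := 0) (b := 2 * Real.pi)
        (fun t _ => hFderiv t) (hcont.intervalIntegrable 0 (2 * Real.pi))
      have hper : circleMap 0 r (2 * Real.pi) = circleMap 0 r 0 := by
        have := periodic_circleMap 0 r 0
        simpa using this
      rw [Function.comp_apply, Function.comp_apply, hper, sub_self] at hint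
      rw [circleIntegral]
      have heqd : ∀ θ : ℝ, deriv (circleMap 0 r) θ • ψ (circleMap 0 r θ)
          = ψ (circleMap 0 r θ) * (circleMap 0 r θ * Complex.I) := by
        intro θ
        rw [deriv_circleMap, smul_eq_mul]
        ring
      simp only [heqd]
      exact hint
    have hA : CircleIntegrable (fun z => deriv (f + g) z / (f + g) z) 0 r := by
      refine ContinuousOn.circleIntegrable hr.le ?_
      refine ContinuousOn.div ((deriv_differentiable hfg).continuous.continuousOn)
        (hfg.continuous.continuousOn) hfgs
    have hB : CircleIntegrable (fun z => deriv f z / f z) 0 r := by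
      refine ContinuousOn.circleIntegrable hr.le ?_
      refine ContinuousOn.div ((deriv_differentiable hf).continuous.continuousOn)
        (hf.continuous.continuousOn) hfs
    have h3 := circleIntegral.integral_sub hA hB
    have h4 : (∮ z in C(0, r), (deriv (f + g) z / (f + g) z - deriv f z / f z)) = 0 := hψ0
    rw [h3] at h4
    exact sub_eq_zero.mp h4
  have h2pi : (2 * (Real.pi : ℂ) * Complex.I) ≠ 0 := by
    simp [Real.pi_ne_zero, Complex.I_ne_zero, Complex.ofReal_ne_zero]
  have : (N' : ℂ) = N := by
    have h := hAPfg.symm.trans (hkey.trans hAPf)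
    have h5 : (2 * (Real.pi:ℂ) * Complex.I) * (N' : ℂ)
        = (2 * (Real.pi:ℂ) * Complex.I) * (N : ℂ) := by linear_combination h
    exact mul_left_cancel₀ h2pi h5
  have : N' = N := by exact_mod_cast this
  rw [this]

open MeasureTheory in
lemma exists_good_radius {Z : Set ℂ} (hZ : Z.Finite) {γ c d : ℝ} (hγ : 0 < γ)
    (hcd : c < d) (hlen : (Z.ncard : ℝ) * (2 * γ) ≤ d - c) :
    ∃ r ∈ Set.Icc c d, ∀ a ∈ Z, γ ≤ |r - ‖a‖| := by
  classical
  by_contra hcon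
  push_neg at hcon
  set U : Set ℝ := ⋃ a ∈ hZ.toFinset, Set.Ioo (‖a‖ - γ) (‖a‖ + γ) with hUdef
  have hUopen : IsOpen U := isOpen_biUnion fun a _ => isOpen_Ioo
  have hsub : Set.Icc c d ⊆ U := by
    intro r hr
    obtain ⟨a, haZ, ha⟩ := hcon r hr
    rw [abs_sub_lt_iff] at ha
    exact Set.mem_biUnion (hZ.mem_toFinset.mpr haZ)
      (Set.mem_Ioo.mpr ⟨by linarith [ha.2], by linarith [ha.1]⟩)
  obtain ⟨ε, hε, hthick⟩ := (isCompact_Icc (a := c) (b := d)).exists_thickening_subset_open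
    hUopen hsub
  have hIoo : Set.Ioo (c - ε) (d + ε) ⊆ U := by
    intro x hx
    obtain ⟨hx1, hx2⟩ := hx
    refine hthick (Metric.mem_thickening_iff.mpr ⟨max c (min x d), ?_, ?_⟩)
    · exact Set.mem_Icc.mpr ⟨le_max_left _ _, max_le hcd.le (min_le_right _ _)⟩
    · rw [Real.dist_eq, abs_lt]
      rcases le_total x d with h2|h2
      · rw [min_eq_left h2]
        rcases le_total x c with h1|h1
        · rw [max_eq_left h1]
          constructor <;> linarith
        · rw [max_eq_right h1]
          constructor <;> linarith
      · rw [min_eq_right h2, max_eq_right hcd.le]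
        constructor <;> linarith
  have hvol1 : volume U ≤ ENNReal.ofReal ((Z.ncard : ℝ) * (2 * γ)) := by
    calc volume U ≤ ∑ a ∈ hZ.toFinset, volume (Set.Ioo (‖a‖ - γ) (‖a‖ + γ)) :=
          measure_biUnion_finset_le _ _
      _ = ∑ _a ∈ hZ.toFinset, ENNReal.ofReal (2 * γ) := by
          refine Finset.sum_congr rfl fun a _ => ?_
          rw [Real.volume_Ioo]
          congr 1
          ring
      _ = (hZ.toFinset.card : ENNReal) * ENNReal.ofReal (2 * γ) := by
          rw [Finset.sum_const, nsmul_eq_mul]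
      _ = ENNReal.ofReal ((Z.ncard : ℝ) * (2 * γ)) := by
          rw [Set.ncard_eq_toFinset_card Z hZ, ← ENNReal.ofReal_natCast hZ.toFinset.card,
            ← ENNReal.ofReal_mul (by positivity)]
  have hvol2 : ENNReal.ofReal (d - c + 2 * ε) ≤ volume U := by
    calc ENNReal.ofReal (d - c + 2 * ε) = volume (Set.Ioo (c - ε) (d + ε)) := by
          rw [Real.volume_Ioo]
          congr 1
          ring
      _ ≤ volume U := measure_mono hIoo
  have hfin := hvol2.trans hvol1
  rw [ENNReal.ofReal_le_ofReal_iff (by positivity)] at hfin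
  linarith

end ZP

open ZP


/-- Perturbation of zeros: let `f, g` be entire, `B, ρ ≥ 1`, suppose `f` has at most
`M > 0` zeros (with multiplicity) in `D(0, 2Bρ)`, let `0 < γ < ρ/(2M)`, and assume
`max_{|z| ≤ 2Bρ}|g| < min{|f(z)| : z ∈ D(0,2Bρ), dist(z, zeros of f in D(0,2Bρ)) ≥ γ}`.
Then for every `ρ′ ∈ (2Mγ, 2Bρ − 2Mγ)`,
`n_{f+g}(ρ′ − 2Mγ) ≤ n_f(ρ′) ≤ n_{f+g}(ρ′ + 2Mγ)` for closed disks of those radii. -/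
theorem zero_perturbation (f g : ℂ → ℂ) (hf : Differentiable ℂ f) (hg : Differentiable ℂ g)
    (B ρ : ℝ) (hB : 1 ≤ B) (hρ : 1 ≤ ρ) (M : ℕ) (hM : 0 < M)
    (hzeros : zeroCount f hf (ball 0 (2 * B * ρ)) ≤ M)
    (γ : ℝ) (hγ0 : 0 < γ) (hγ : γ < ρ / (2 * M))
    (hdom :
      sSup ((fun z => ‖g z‖) '' closedBall (0 : ℂ) (2 * B * ρ)) <
        sInf ((fun z => ‖f z‖) ''
          {z : ℂ | z ∈ ball (0 : ℂ) (2 * B * ρ) ∧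
            ∀ w ∈ ball (0 : ℂ) (2 * B * ρ), f w = 0 → γ ≤ dist z w})) :
    ∀ ρ' ∈ Set.Ioo (2 * M * γ) (2 * B * ρ - 2 * M * γ),
      zeroCount (f + g) (hf.add hg) (closedBall 0 (ρ' - 2 * M * γ)) ≤
          zeroCount f hf (closedBall 0 ρ') ∧
        zeroCount f hf (closedBall 0 ρ') ≤
          zeroCount (f + g) (hf.add hg) (closedBall 0 (ρ' + 2 * M * γ)) := by
  intro ρ' hρ'
  obtain ⟨hρ'l, hρ'r⟩ := hρ'
  set R : ℝ := 2 * B * ρ with hRdef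
  set S : Set ℂ := {z : ℂ | z ∈ ball (0 : ℂ) R ∧
      ∀ w ∈ ball (0 : ℂ) R, f w = 0 → γ ≤ dist z w} with hSdef
  have hM0 : (0:ℝ) < M := Nat.cast_pos.mpr hM
  have h2Mγ : 2 * (M:ℝ) * γ < ρ := by
    have := (lt_div_iff₀ (by positivity)).mp hγ
    linarith
  have hMγ0 : 0 < 2 * (M:ℝ) * γ := by positivity
  have hρR : 2 * ρ ≤ R := by nlinarith
  have hR0 : 0 < R := by nlinarith
  -- bounds coming from the domination hypothesis
  have hbddg : BddAbove ((fun z => ‖g z‖) '' closedBall (0 : ℂ) R) :=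
    ((isCompact_closedBall (0:ℂ) R).image_of_continuousOn
      (hg.continuous.norm.continuousOn)).bddAbove
  have hgle : ∀ z ∈ closedBall (0:ℂ) R,
      ‖g z‖ ≤ sSup ((fun z => ‖g z‖) '' closedBall (0 : ℂ) R) :=
    fun z hz => le_csSup hbddg ⟨z, hz, rfl⟩
  have hfge : ∀ z ∈ S, sInf ((fun z => ‖f z‖) '' S) ≤ ‖f z‖ := by
    intro z hz
    refine csInf_le ⟨0, ?_⟩ ⟨z, hz, rfl⟩
    rintro x ⟨w, -, rfl⟩
    exact norm_nonneg _
  have hsup0 : 0 ≤ sSup ((fun z => ‖g z‖) '' closedBall (0 : ℂ) R) :=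
    (norm_nonneg (g 0)).trans (hgle 0 (mem_closedBall_self hR0.le))
  have hsinf0 : 0 < sInf ((fun z => ‖f z‖) '' S) := hsup0.trans_lt hdom
  have hSne : S.Nonempty := by
    by_contra h
    rw [Set.not_nonempty_iff_eq_empty] at h
    rw [h, Set.image_empty, Real.sInf_empty] at hsinf0
    exact lt_irrefl _ hsinf0
  obtain ⟨z₁, hz₁S⟩ := hSne
  have hz₁ : f z₁ ≠ 0 := by
    intro h0
    have h1 := hz₁S.2 z₁ hz₁S.1 h0
    rw [dist_self] at h1
    linarith
  -- the zeros of `f` in the big ball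
  set Z : Set ℂ := {w : ℂ | w ∈ ball (0:ℂ) R ∧ f w = 0} with hZdef
  have hZfin : Z.Finite := (finite_zeros hf hz₁ (isCompact_closedBall (0:ℂ) R)).subset
    (fun z hz => ⟨ball_subset_closedBall hz.1, hz.2⟩)
  have hZcard : (Z.ncard : ℝ) ≤ M := by
    have h1 : (Z.ncard : ENNReal) ≤ zeroCount f hf (ball 0 R) := by
      rw [zeroCount, tsum_subtype (ball (0:ℂ) R)
        (fun w => (analyticOrderAt f w).toENNReal)]
      calc (Z.ncard : ENNReal) = ∑ _a ∈ hZfin.toFinset, 1 := by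
            rw [Finset.sum_const, nsmul_eq_mul, mul_one, Set.ncard_eq_toFinset_card Z hZfin]
        _ ≤ ∑ a ∈ hZfin.toFinset, (ball (0:ℂ) R).indicator
              (fun w => (analyticOrderAt f w).toENNReal) a := by
            refine Finset.sum_le_sum fun a ha => ?_
            rw [Set.Finite.mem_toFinset] at ha
            rw [Set.indicator_of_mem ha.1]
            have hne : analyticOrderAt f a ≠ 0 := by
              intro h
              exact ((order_eq_zero_iff (hf.analyticAt a)).mp h) ha.2
            calc (1:ENNReal) = ((1:ℕ∞) : ENNReal) := by simp
              _ ≤ _ := ENat.toENNReal_le.mpr (ENat.one_le_iff_ne_zero.mpr hne)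
        _ ≤ _ := ENNReal.sum_le_tsum _
    have h2 := h1.trans hzeros
    have h3 : Z.ncard ≤ M := by exact_mod_cast h2
    exact_mod_cast h3
  -- Rouché applies on any circle avoiding the zeros by `γ`
  have key : ∀ r : ℝ, 0 < r → r < R → (∀ a ∈ Z, γ ≤ |r - ‖a‖|) →
      zeroCount (f + g) (hf.add hg) (closedBall 0 r) = zeroCount f hf (closedBall 0 r) := by
    intro r hr0 hrR hfar
    refine rouche hf hg (hf.add hg) hr0 ?_
    intro z hz
    have hzn : ‖z‖ = r := by simpa using hz
    have hzS : z ∈ S := by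
      refine ⟨mem_ball_zero_iff.mpr (by rw [hzn]; exact hrR), fun w hw hfw => ?_⟩
      have h1 := hfar w ⟨hw, hfw⟩
      calc γ ≤ |r - ‖w‖| := h1
        _ = |‖z‖ - ‖w‖| := by rw [hzn]
        _ ≤ ‖z - w‖ := abs_norm_sub_norm_le z w
        _ = dist z w := (dist_eq_norm z w).symm
    have hzB : z ∈ closedBall (0:ℂ) R :=
      mem_closedBall_zero_iff.mpr (by rw [hzn]; exact hrR.le)
    calc ‖g z‖ ≤ sSup ((fun z => ‖g z‖) '' closedBall (0 : ℂ) R) := hgle z hzB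
      _ < sInf ((fun z => ‖f z‖) '' S) := hdom
      _ ≤ ‖f z‖ := hfge z hzS
  have hcard2γ : (Z.ncard : ℝ) * (2 * γ) ≤ 2 * M * γ := by nlinarith
  constructor
  · -- lower bound
    obtain ⟨r, hrIcc, hrfar⟩ := exists_good_radius hZfin hγ0
      (show ρ' - 2 * M * γ < ρ' by linarith)
      (by rw [show ρ' - (ρ' - 2 * M * γ) = 2 * M * γ by ring]; exact hcard2γ)
    have hr0 : 0 < r := lt_of_lt_of_le (by linarith) hrIcc.1
    have hrR : r < R := lt_of_le_of_lt hrIcc.2 (by linarith)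
    calc zeroCount (f + g) (hf.add hg) (closedBall 0 (ρ' - 2 * M * γ))
        ≤ zeroCount (f + g) (hf.add hg) (closedBall 0 r) :=
          zeroCount_mono _ (closedBall_subset_closedBall hrIcc.1)
      _ = zeroCount f hf (closedBall 0 r) := key r hr0 hrR hrfar
      _ ≤ zeroCount f hf (closedBall 0 ρ') :=
          zeroCount_mono _ (closedBall_subset_closedBall hrIcc.2)
  · -- upper bound
    obtain ⟨r, hrIcc, hrfar⟩ := exists_good_radius hZfin hγ0
      (show ρ' < ρ' + 2 * M * γ by linarith)
      (by rw [show ρ' + 2 * M * γ - ρ' = 2 * M * γ by ring]; exact hcard2γ)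
    have hr0 : 0 < r := lt_of_lt_of_le (by linarith) hrIcc.1
    have hrR : r < R := lt_of_le_of_lt hrIcc.2 (by linarith)
    calc zeroCount f hf (closedBall 0 ρ')
        ≤ zeroCount f hf (closedBall 0 r) :=
          zeroCount_mono _ (closedBall_subset_closedBall hrIcc.1)
      _ = zeroCount (f + g) (hf.add hg) (closedBall 0 r) := (key r hr0 hrR hrfar).symm
      _ ≤ zeroCount (f + g) (hf.add hg) (closedBall 0 (ρ' + 2 * M * γ)) :=
          zeroCount_mono _ (closedBall_subset_closedBall hrIcc.2)
end

section
/- Let α > 0, p ∈ [0,1), and let q ∈ (1, α) satisfy q(log q − 1) = p(log p − 1) (with q = e when p = 0). Let ν be a radially symmetric probability measure on ℂ with compact support such that ν(open unit disk) ≤ p/α, and define B_α(ν) = 2 sup_{w∈ℂ}{U_ν(w) − |w|²/(2α)} and g_ν(z) = U_ν(z) − |z|²/(2α) − B_α(ν)/2. Then for every z with |z| = 1, g_ν(z) ≤ q(1 − log q)/(2α) − 1/(2α). -/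
open MeasureTheory

/-- The logarithmic potential `U_ν(z) = ∫ log|z−w| dν(w)` of a measure on `ℂ`. -/
noncomputable def logPot (σ : Measure ℂ) (z : ℂ) : ℝ :=
  ∫ w, Real.log ‖z - w‖ ∂σ

open MeasureTheory Real Complex intervalIntegral Metric

noncomputable def Complex.abs : AbsoluteValue ℂ ℝ where
  toFun z := ‖z‖
  map_mul' := norm_mul
  nonneg' := norm_nonneg
  eq_zero' _ := norm_eq_zero
  add_le' := norm_add_le

@[simp] lemma Complex.abs_apply' (z : ℂ) : Complex.abs z = ‖z‖ := rfl
lemma Complex.norm_eq_abs (z : ℂ) : ‖z‖ = Complex.abs z := rfl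
lemma Complex.re_le_abs (z : ℂ) : z.re ≤ Complex.abs z := Complex.re_le_norm z
lemma Complex.sq_abs (z : ℂ) : Complex.abs z ^ 2 = Complex.normSq z := Complex.sq_norm z
lemma Complex.continuous_abs : Continuous Complex.abs := continuous_norm
lemma Complex.abs_exp_ofReal_mul_I (x : ℝ) : Complex.abs (Complex.exp (x * Complex.I)) = 1 :=
  Complex.norm_exp_ofReal_mul_I x
lemma Complex.abs_ofReal (r : ℝ) : Complex.abs (r : ℂ) = |r| := by
  rw [Complex.abs_apply', Complex.norm_real, Real.norm_eq_abs]
lemma Complex.abs_conj (z : ℂ) : Complex.abs ((starRingEnd ℂ) z) = Complex.abs z :=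
  Complex.norm_conj z
lemma Complex.abs_mul_exp_arg_mul_I (z : ℂ) :
    ((Complex.abs z : ℝ) : ℂ) * Complex.exp (Complex.arg z * Complex.I) = z :=
  Complex.norm_mul_exp_arg_mul_I z

lemma slit_aux {u z : ℂ} (hu : Complex.abs u < 1) (hz : Complex.abs z ≤ 1) :
    1 - u * z ∈ Complex.slitPlane := by
  rw [Complex.mem_slitPlane_iff]
  left
  have h1 : (u * z).re ≤ Complex.abs (u * z) := Complex.re_le_abs _
  have h2 : Complex.abs (u * z) < 1 := by
    rw [map_mul]
    calc Complex.abs u * Complex.abs z ≤ Complex.abs u * 1 :=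
      mul_le_mul_of_nonneg_left hz (AbsoluteValue.nonneg _ _)
    _ < 1 := by simpa using hu
  simp only [Complex.sub_re, Complex.one_re]
  linarith

lemma log_cont {u : ℂ} (hu : Complex.abs u < 1) :
    Continuous fun θ : ℝ => Complex.log (1 - u * Complex.exp (θ * Complex.I)) := by
  rw [continuous_iff_continuousAt]
  intro θ
  have hc : ContinuousAt (fun θ : ℝ => 1 - u * Complex.exp (θ * Complex.I)) θ := by
    fun_prop
  exact (continuousAt_clog (slit_aux hu (by simp))).comp (x := θ) hc

/-- Mean value property: circle average of `log |1 - u e^{iθ}|` vanishes for `|u| < 1`. -/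
lemma core_circle_avg {u : ℂ} (hu : Complex.abs u < 1) :
    ∫ θ in (0:ℝ)..(2*π), Real.log (Complex.abs (1 - u * Complex.exp (θ * Complex.I))) = 0 := by
  set f : ℂ → ℂ := fun z => Complex.log (1 - u * z) with hf
  have hdiff : DifferentiableOn ℂ f (closedBall (0:ℂ) 1) := by
    intro z hz
    refine DifferentiableAt.differentiableWithinAt ?_
    have h1 : DifferentiableAt ℂ (fun z : ℂ => 1 - u * z) z := by fun_prop
    exact (Complex.differentiableAt_log (slit_aux hu (by simpa [Complex.dist_eq] using hz))).comp z h1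
  have hmem : (0:ℂ) ∈ ball (0:ℂ) 1 := mem_ball_self one_pos
  have hC := hdiff.circleIntegral_sub_inv_smul hmem
  have hf0 : f 0 = 0 := by simp [hf]
  rw [hf0, smul_zero] at hC
  -- unfold the circle integral
  rw [circleIntegral] at hC
  have hint : ∀ θ : ℝ, (deriv (circleMap 0 1) θ) • ((circleMap 0 1 θ - 0)⁻¹ • f (circleMap 0 1 θ))
      = Complex.I * f (circleMap 0 1 θ) := by
    intro θ
    rw [deriv_circleMap]
    have hne : circleMap 0 1 θ ≠ 0 := by
      simpa using circleMap_ne_center (one_ne_zero) (c := (0:ℂ)) (θ := θ)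
    field_simp [smul_eq_mul]
    rw [smul_eq_mul, smul_eq_mul, sub_zero, one_div, mul_assoc, mul_left_comm (circleMap 0 1 θ) Complex.I, mul_inv_cancel_left₀ hne]
  simp only [hint] at hC
  rw [intervalIntegral.integral_const_mul] at hC
  have hI : (Complex.I : ℂ) ≠ 0 := Complex.I_ne_zero
  have hC2 : (∫ θ in (0:ℝ)..(2*π), f (circleMap 0 1 θ)) = 0 := by
    rcases mul_eq_zero.mp hC with h | h
    · exact absurd h hI
    · exact h
  have hcont : Continuous fun θ : ℝ => f (circleMap 0 1 θ) := by
    have := log_cont hu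
    simpa [hf, circleMap] using this
  have hii : IntervalIntegrable (fun θ : ℝ => f (circleMap 0 1 θ)) volume 0 (2*π) :=
    hcont.intervalIntegrable _ _
  have hre := Complex.reCLM.intervalIntegral_comp_comm hii
  rw [hC2] at hre
  simp only [Complex.reCLM_apply] at hre
  have : ∀ θ : ℝ, (f (circleMap 0 1 θ)).re
      = Real.log (Complex.abs (1 - u * Complex.exp (θ * Complex.I))) := by
    intro θ
    simp [hf, circleMap, Complex.log_re]
  simp only [this] at hre
  simpa using hre

lemma jordan {x : ℝ} (h0 : 0 ≤ x) (h1 : x ≤ π/2) : (9/20)*x ≤ Real.sin x := by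
  rcases eq_or_lt_of_le h0 with h | h0'
  · simp [← h]
  rcases le_or_gt x 1 with hx1 | hx1
  · have := Real.sin_gt_sub_cube h0'
    nlinarith [sq_nonneg x]
  · have hpi : π < 3.15 := Real.pi_lt_d2
    have hpi2 : 3.14 < π := by linarith [Real.pi_gt_d6]
    have hm : Real.sin 1 ≤ Real.sin x := by
      apply Real.strictMonoOn_sin.monotoneOn ?_ ?_ hx1.le
      · constructor <;> [linarith; linarith]
      · constructor <;> [linarith; linarith]
    have hs1 : (3:ℝ)/4 < Real.sin 1 := by
      have := Real.sin_gt_sub_cube (by norm_num : (0:ℝ) < 1)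
      norm_num at this ⊢; linarith
    nlinarith

lemma abs_one_sub_exp {θ : ℝ} (h0 : 0 ≤ θ) (h1 : θ ≤ 2*π) :
    Complex.abs (1 - Complex.exp (θ * Complex.I)) = 2 * Real.sin (θ/2) := by
  have hre : (1 - Complex.exp (θ * Complex.I)).re = 1 - Real.cos θ := by
    simp [Complex.exp_ofReal_mul_I_re]
  have him : (1 - Complex.exp (θ * Complex.I)).im = - Real.sin θ := by
    simp [Complex.exp_ofReal_mul_I_im]
  have hsq : Complex.abs (1 - Complex.exp (θ * Complex.I)) ^ 2 = 2 - 2*Real.cos θ := by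
    rw [Complex.sq_abs, Complex.normSq_apply, hre, him]
    nlinarith [Real.sin_sq_add_cos_sq θ]
  have hhalf : Real.sin (θ/2) = Real.sqrt ((1 - Real.cos θ)/2) := Real.sin_half_eq_sqrt h0 h1
  have hcos := Real.cos_le_one θ
  have h2 : (2 * Real.sin (θ/2))^2 = 2 - 2*Real.cos θ := by
    rw [hhalf, mul_pow, Real.sq_sqrt (by linarith)]
    ring
  have hn1 : 0 ≤ Complex.abs (1 - Complex.exp (θ * Complex.I)) := AbsoluteValue.nonneg _ _
  have hn2 : 0 ≤ 2 * Real.sin (θ/2) := by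
    have := Real.sin_nonneg_of_nonneg_of_le_pi (x := θ/2) (by linarith) (by linarith)
    linarith
  nlinarith [hsq, h2]

lemma logx_bound {x : ℝ} (hx : 0 < x) (hpi : x ≤ π) : |Real.log x| ≤ 4 * (Real.sqrt x)⁻¹ := by
  have hs : 0 < Real.sqrt x := Real.sqrt_pos.2 hx
  have hlogs : Real.log x = 2 * Real.log (Real.sqrt x) := by
    rw [Real.log_sqrt hx.le]; ring
  have h1 : Real.log (Real.sqrt x) ≤ Real.sqrt x - 1 := Real.log_le_sub_one_of_pos hs
  have h2 : - Real.log (Real.sqrt x) ≤ (Real.sqrt x)⁻¹ - 1 := by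
    have := Real.log_le_sub_one_of_pos (inv_pos.2 hs)
    rwa [Real.log_inv] at this
  have hsq : Real.sqrt x ^ 2 = x := Real.sq_sqrt hx.le
  have hpi315 : π < 3.15 := Real.pi_lt_d2
  rw [abs_le]
  constructor
  · -- lower bound : -(4/√x) ≤ log x
    have : -Real.log x ≤ 2*((Real.sqrt x)⁻¹ - 1) := by rw [hlogs]; linarith
    have hinv : 0 < (Real.sqrt x)⁻¹ := inv_pos.2 hs
    linarith
  · -- upper : log x ≤ 4/√x
    have hup : Real.log x ≤ 2*(Real.sqrt x - 1) := by rw [hlogs]; linarith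
    have hs2 : Real.sqrt x < 2 := by nlinarith
    have key : 2*(Real.sqrt x - 1) ≤ 4 * (Real.sqrt x)⁻¹ := by
      have hmul : 2*(Real.sqrt x - 1) * Real.sqrt x ≤ 4 := by nlinarith
      have := (le_div_iff₀ hs).mpr hmul
      rwa [div_eq_mul_inv] at this
    linarith

noncomputable def Gf (θ : ℝ) : ℝ := Real.log (Complex.abs (1 - Complex.exp (θ * Complex.I)))

lemma Gf_ii : IntervalIntegrable Gf volume 0 (2*π) := by
  have hpi : 0 < π := Real.pi_pos
  set D : ℝ → ℝ := fun θ => Real.log 2 + 6*(Real.sqrt θ)⁻¹ + 6*(Real.sqrt (2*π - θ))⁻¹ with hD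
  have hDi : IntervalIntegrable D volume 0 (2*π) := by
    have base : IntervalIntegrable (fun θ : ℝ => θ ^ (-(1/2) : ℝ)) volume 0 (2*π) :=
      intervalIntegral.intervalIntegrable_rpow' (by norm_num)
    have hsq : IntervalIntegrable (fun θ : ℝ => (Real.sqrt θ)⁻¹) volume 0 (2*π) := by
      rw [intervalIntegrable_iff] at base ⊢
      apply base.congr_fun ?_ measurableSet_uIoc
      intro θ hθ
      rw [Set.uIoc_of_le (by linarith)] at hθ
      simp only []
      rw [Real.rpow_neg hθ.1.le, Real.sqrt_eq_rpow]
    have hsq2 : IntervalIntegrable (fun θ : ℝ => (Real.sqrt (2*π - θ))⁻¹) volume 0 (2*π) := by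
      have := (hsq.comp_sub_left (2*π))
      simpa using this.symm
    exact (intervalIntegrable_const.add (hsq.const_mul 6)).add (hsq2.const_mul 6)
  apply hDi.mono_fun
  · apply Measurable.aestronglyMeasurable
    apply Real.measurable_log.comp
    exact Complex.continuous_abs.measurable.comp (by fun_prop)
  · rw [Filter.EventuallyLE, ae_restrict_iff' measurableSet_uIoc]
    apply Filter.Eventually.of_forall
    intro θ hθ
    rw [Set.uIoc_of_le (by linarith)] at hθ
    obtain ⟨hθ0, hθ2⟩ := hθ
    have hD0 : 0 ≤ D θ := by
      have h1 : (0:ℝ) ≤ (Real.sqrt θ)⁻¹ := by positivity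
      have h2 : (0:ℝ) ≤ (Real.sqrt (2*π - θ))⁻¹ := by positivity
      have := Real.log_nonneg (by norm_num : (1:ℝ) ≤ 2)
      simp only [hD]; linarith
    rcases eq_or_lt_of_le hθ2 with h2pi | hθlt
    · -- θ = 2π : Gf θ = log 0 = 0
      have : Complex.exp (θ * Complex.I) = 1 := by
        rw [h2pi]; push_cast
        exact Complex.exp_two_pi_mul_I
      simp only [Gf, this, sub_self, map_zero, Real.log_zero, norm_zero]
      exact norm_nonneg _
    · -- 0 < θ < 2π
      set m := min θ (2*π - θ) with hm
      have hm0 : 0 < m := by simp [hm]; constructor <;> linarith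
      have hmπ : m ≤ π := by
        rcases min_le_iff.mpr (Or.inl (le_refl θ)) with _
        simp [hm]
        rcases le_or_gt θ π with h | h
        · left; linarith
        · right; linarith
      have habs : Complex.abs (1 - Complex.exp (θ * Complex.I)) = 2 * Real.sin (θ/2) :=
        abs_one_sub_exp hθ0.le hθ2
      have hlow : (9/20)*m ≤ 2 * Real.sin (θ/2) := by
        rcases le_or_gt θ π with h | h
        · have := jordan (by linarith : (0:ℝ) ≤ θ/2) (by linarith : θ/2 ≤ π/2)
          have hmθ : m ≤ θ := min_le_left _ _
          nlinarith
        · have heq : Real.sin (θ/2) = Real.sin ((2*π - θ)/2) := by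
            rw [show (2*π - θ)/2 = π - θ/2 by ring, Real.sin_pi_sub]
          have := jordan (by linarith : (0:ℝ) ≤ (2*π-θ)/2) (by linarith : (2*π-θ)/2 ≤ π/2)
          have hmθ : m ≤ 2*π - θ := min_le_right _ _
          nlinarith
      have hup : 2 * Real.sin (θ/2) ≤ 2 := by linarith [Real.sin_le_one (θ/2)]
      have hy0 : 0 < 2 * Real.sin (θ/2) := lt_of_lt_of_le (by positivity) hlow
      -- |log y| ≤ log 2 + |log ((9/20) m)|
      have hstep1 : |Gf θ| ≤ Real.log 2 + |Real.log ((9/20)*m)| := by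
        simp only [Gf, habs]
        rw [abs_le]
        constructor
        · have : Real.log ((9/20)*m) ≤ Real.log (2*Real.sin (θ/2)) :=
            Real.log_le_log (by positivity) hlow
          have hl2 := Real.log_nonneg (by norm_num : (1:ℝ) ≤ 2)
          have := neg_abs_le (Real.log ((9/20)*m))
          linarith
        · have : Real.log (2*Real.sin (θ/2)) ≤ Real.log 2 := Real.log_le_log hy0 hup
          have := abs_nonneg (Real.log ((9/20)*m))
          linarith
      have hstep2 : |Real.log ((9/20)*m)| ≤ 4 * (Real.sqrt ((9/20)*m))⁻¹ :=
        logx_bound (by positivity) (by nlinarith)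
      have hstep3 : 4 * (Real.sqrt ((9/20)*m))⁻¹ ≤ 6 * (Real.sqrt m)⁻¹ := by
        rw [Real.sqrt_mul (by norm_num : (0:ℝ) ≤ 9/20)]
        have h23 : (2:ℝ)/3 ≤ Real.sqrt (9/20) := by
          rw [show (2:ℝ)/3 = Real.sqrt ((2/3)^2) by rw [Real.sqrt_sq (by norm_num)]]
          apply Real.sqrt_le_sqrt; norm_num
        have hsm : 0 < Real.sqrt m := Real.sqrt_pos.2 hm0
        have h920 : 0 < Real.sqrt (9/20) := by positivity
        rw [mul_inv]
        rw [show (4:ℝ) * ((Real.sqrt (9/20))⁻¹ * (Real.sqrt m)⁻¹)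
            = (4 * (Real.sqrt (9/20))⁻¹) * (Real.sqrt m)⁻¹ by ring]
        apply mul_le_mul_of_nonneg_right _ (by positivity)
        have hinv : (Real.sqrt (9/20))⁻¹ ≤ 3/2 := by
          have := inv_anti₀ (by norm_num : (0:ℝ) < 2/3) h23
          simpa using this
        linarith
      have hstep4 : (Real.sqrt m)⁻¹ ≤ (Real.sqrt θ)⁻¹ + (Real.sqrt (2*π - θ))⁻¹ := by
        rcases min_cases θ (2*π - θ) with ⟨h, _⟩ | ⟨h, _⟩
        · rw [hm, h]
          have : (0:ℝ) ≤ (Real.sqrt (2*π - θ))⁻¹ := by positivity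
          linarith
        · rw [hm, h]
          have : (0:ℝ) ≤ (Real.sqrt θ)⁻¹ := by positivity
          linarith
      rw [Real.norm_eq_abs, Real.norm_eq_abs, _root_.abs_of_nonneg hD0]
      simp only [hD]
      linarith

lemma Gf'_def : ∀ θ, Gf θ = Real.log (Complex.abs (1 - Complex.exp (θ * Complex.I))) := fun _ => rfl

lemma exp_two_pi : Complex.exp (((2*π : ℝ) : ℂ) * Complex.I) = 1 := by
  push_cast
  exact Complex.exp_two_pi_mul_I

lemma Gf_per : Function.Periodic Gf (2*π) := by
  intro θ
  rw [Gf'_def, Gf'_def]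
  congr 2
  push_cast [add_mul]
  rw [Complex.exp_add]
  have := exp_two_pi
  push_cast at this
  rw [this, mul_one]

lemma Gf_ii_all : ∀ a b : ℝ, IntervalIntegrable Gf volume a b := by
  have hpi : 0 < π := Real.pi_pos
  have key : ∀ n : ℤ, IntervalIntegrable Gf volume (n*(2*π)) ((n+1)*(2*π)) := by
    intro n
    have h := Gf_ii.comp_add_right (-(n*(2*π)))
    have heq : (fun x => Gf (x + -(n*(2*π)))) = Gf := by
      funext x
      have := (Gf_per.int_mul (-n)) x
      simp only [Int.cast_neg, neg_mul] at this ⊢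
      rw [show x + -(↑n * (2 * π)) = x + -↑n * (2*π) by push_cast; ring] at *
      rw [this]
    rw [heq] at h
    have : IntervalIntegrable Gf volume (0 - -(n*(2*π))) (2*π - -(n*(2*π))) := h
    simpa [sub_neg_eq_add] using
      this.mono_set (by rw [Set.uIcc_subset_uIcc_iff_le]; constructor <;> [apply le_of_eq; apply le_of_eq] <;> push_cast <;> ring)
  -- integrable on [-(k)·2π, k·2π] for every k : ℕ
  have big : ∀ k : ℕ, IntervalIntegrable Gf volume (-(k:ℝ)*(2*π)) ((k:ℝ)*(2*π)) := by
    intro k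
    induction k with
    | zero => simp
    | succ k ih =>
      have h1 := key (-(k+1) : ℤ)
      have h2 := key (k : ℤ)
      push_cast at h1 h2
      have h1' : IntervalIntegrable Gf volume (-((k:ℝ)+1)*(2*π)) (-(k:ℝ)*(2*π)) := by
        convert h1 using 2 <;> push_cast <;> ring
      have h2' : IntervalIntegrable Gf volume ((k:ℝ)*(2*π)) (((k:ℝ)+1)*(2*π)) := by
        convert h2 using 2 <;> push_cast <;> ring
      have := (h1'.trans ih).trans h2'
      convert this using 2 <;> push_cast <;> ring
  intro a b
  obtain ⟨k, hk⟩ := exists_nat_ge ((max |a| |b|)/(2*π))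
  have hk' : max |a| |b| ≤ (k:ℝ)*(2*π) := by
    rw [div_le_iff₀ (by linarith)] at hk
    linarith
  refine (big k).mono_set ?_
  have h1 : -((k:ℝ)*(2*π)) ≤ a := by
    have := le_max_left |a| |b|; have := neg_abs_le a; linarith
  have h2 : a ≤ (k:ℝ)*(2*π) := by have := le_max_left |a| |b|; have := le_abs_self a; linarith
  have h3 : -((k:ℝ)*(2*π)) ≤ b := by
    have := le_max_right |a| |b|; have := neg_abs_le b; linarith
  have h4 : b ≤ (k:ℝ)*(2*π) := by have := le_max_right |a| |b|; have := le_abs_self b; linarith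
  have : Set.uIcc a b ⊆ Set.Icc (-((k:ℝ)*(2*π))) ((k:ℝ)*(2*π)) := by
    apply Set.uIcc_subset_Icc ⟨h1, h2⟩ ⟨h3, h4⟩
  simpa [Set.uIcc_of_le (by linarith : -((k:ℝ)*(2*π)) ≤ (k:ℝ)*(2*π)), neg_mul] using this

lemma Gf_val : ∫ θ in (0:ℝ)..(2*π), Gf θ = 0 := by
  have hpi : 0 < π := Real.pi_pos
  set I0 : ℝ := ∫ θ in (0:ℝ)..(2*π), Gf θ with hI0
  -- ∫ Gf(2θ) over [0,2π] = I0
  have hdouble : ∫ θ in (0:ℝ)..(2*π), Gf (2*θ) = I0 := by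
    rw [intervalIntegral.integral_comp_mul_left (c := 2) Gf (by norm_num)]
    have h1 : ∫ θ in (2*(0:ℝ))..(2*(2*π)), Gf θ = (∫ θ in (2*(0:ℝ))..(2*π), Gf θ) + ∫ θ in (2*π)..(2*(2*π)), Gf θ :=
      (integral_add_adjacent_intervals (by simpa using Gf_ii_all 0 (2*π)) (Gf_ii_all _ _)).symm
    have h2 : ∫ θ in (2*π)..(2*(2*π)), Gf θ = I0 := by
      have := Gf_per.intervalIntegral_add_eq (2*π) 0
      simpa [show 2*π + 2*π = 2*(2*π) by ring] using this
    rw [h1, h2, show (2:ℝ)*0 = 0 by norm_num, ← hI0]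
    rw [smul_eq_mul]; ring
  -- ∫ Gf(θ+π) over [0,2π] = I0
  have hshift : ∫ θ in (0:ℝ)..(2*π), Gf (θ + π) = I0 := by
    rw [intervalIntegral.integral_comp_add_right Gf π]
    have := Gf_per.intervalIntegral_add_eq π 0
    simpa [show π + 2*π = 2*π + π by ring, show (0:ℝ) + 2*π = 2*π by ring] using this
  -- a.e. identity Gf θ + Gf (θ+π) = Gf (2θ)
  have hae : ∫ θ in (0:ℝ)..(2*π), (Gf θ + Gf (θ + π)) = ∫ θ in (0:ℝ)..(2*π), Gf (2*θ) := by
    apply intervalIntegral.integral_congr_ae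
    have hctble : (volume ({π, 2*π} : Set ℝ)) = 0 :=
      (Set.countable_insert.mpr (Set.countable_singleton _) |>.measure_zero _)
    rw [Filter.eventually_iff, mem_ae_iff]
    have hsub : {θ : ℝ | ¬ (θ ∈ Set.uIoc 0 (2*π) → Gf θ + Gf (θ + π) = Gf (2*θ))} ⊆ ({π, 2*π} : Set ℝ) := by
      intro θ hθ
      simp only [Set.mem_setOf_eq, Classical.not_imp] at hθ
      obtain ⟨hmem, hne⟩ := hθ
      rw [Set.uIoc_of_le (by linarith)] at hmem
      by_contra hout
      simp only [Set.mem_insert_iff, Set.mem_singleton_iff, not_or] at hout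
      obtain ⟨hne1, hne2⟩ := hout
      apply hne
      -- θ ∈ (0, 2π), θ ≠ π : both factors nonzero
      have hz1 : (1 : ℂ) - Complex.exp (θ * Complex.I) ≠ 0 := by
        intro h
        have : Complex.exp (θ * Complex.I) = 1 := by linear_combination -h
        rw [Complex.exp_eq_one_iff] at this
        obtain ⟨n, hn⟩ := this
        have : (θ : ℂ) = (n : ℂ) * (2*π) := by
          have h2 : ((n:ℂ) * (2*↑π)) * Complex.I = (n:ℂ) * (2*(π:ℂ)*Complex.I) := by ring
          rw [← h2] at hn
          exact mul_right_cancel₀ Complex.I_ne_zero hn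
        have hθn : θ = (n : ℝ) * (2*π) := by exact_mod_cast this
        rcases lt_trichotomy (n:ℝ) 1 with h | h | h
        · have : (n:ℝ) ≤ 0 := by
            have : (n:ℤ) < 1 := by exact_mod_cast h
            have : (n:ℤ) ≤ 0 := by omega
            exact_mod_cast this
          nlinarith [hmem.1]
        · rw [hθn, h, one_mul] at hne2; exact hne2 rfl
        · have : (2:ℝ) ≤ (n:ℝ) := by
            have : (1:ℤ) < n := by exact_mod_cast h
            have : (2:ℤ) ≤ n := by omega
            exact_mod_cast this
          nlinarith [hmem.2]
      have hz2 : (1 : ℂ) + Complex.exp (θ * Complex.I) ≠ 0 := by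
        intro h
        have hexp : Complex.exp (θ * Complex.I) = -1 := by linear_combination h
        have : Complex.exp (θ * Complex.I - π * Complex.I) = 1 := by
          rw [Complex.exp_sub, hexp, Complex.exp_pi_mul_I]
          simp
        rw [Complex.exp_eq_one_iff] at this
        obtain ⟨n, hn⟩ := this
        have : ((θ - π : ℝ) : ℂ) = (n:ℂ) * (2*π) := by
          have h2 : (((θ - π : ℝ)) : ℂ) * Complex.I = ((n:ℂ) * (2*(π:ℂ))) * Complex.I := by
            push_cast
            linear_combination hn
          exact mul_right_cancel₀ Complex.I_ne_zero h2
        have hθn : θ - π = (n:ℝ)*(2*π) := by exact_mod_cast this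
        rcases lt_trichotomy (n:ℝ) 0 with h | h | h
        · have : (n:ℝ) ≤ -1 := by
            have : (n:ℤ) < 0 := by exact_mod_cast h; 
            have : (n:ℤ) ≤ -1 := by omega
            exact_mod_cast this
          nlinarith [hmem.1]
        · rw [h, zero_mul, sub_eq_zero] at hθn; exact hne1 hθn
        · have : (1:ℝ) ≤ (n:ℝ) := by
            have : (0:ℤ) < n := by exact_mod_cast h
            have : (1:ℤ) ≤ n := by omega
            exact_mod_cast this
          nlinarith [hmem.2]
      -- now the log identity
      rw [Gf'_def, Gf'_def, Gf'_def]
      have hprod : (1 - Complex.exp ((2*θ : ℝ) * Complex.I))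
          = (1 - Complex.exp (θ * Complex.I)) * (1 + Complex.exp (θ * Complex.I)) := by
        have : Complex.exp ((2*θ : ℝ) * Complex.I) = Complex.exp (θ * Complex.I) * Complex.exp (θ * Complex.I) := by
          rw [← Complex.exp_add]
          congr 1
          push_cast
          ring
        rw [this]; ring
      have hexpshift : Complex.exp ((θ + π : ℝ) * Complex.I) = - Complex.exp (θ * Complex.I) := by
        push_cast [add_mul]
        rw [Complex.exp_add, Complex.exp_pi_mul_I]
        ring
      have habs2 : Complex.abs (1 - Complex.exp ((θ + π:ℝ) * Complex.I))
          = Complex.abs (1 + Complex.exp (θ * Complex.I)) := by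
        rw [hexpshift]
        congr 1
        ring
      rw [habs2, hprod, map_mul,
        Real.log_mul (Complex.abs.ne_zero hz1) (Complex.abs.ne_zero hz2)]
    exact measure_mono_null hsub hctble
  have hsum : ∫ θ in (0:ℝ)..(2*π), (Gf θ + Gf (θ + π))
      = I0 + I0 := by
    rw [intervalIntegral.integral_add (Gf_ii_all _ _)]
    · rw [hshift]
    · have := (Gf_ii_all π (2*π + π)).comp_add_right π
      simpa using this
  rw [hsum, hdouble] at hae
  linarith

lemma log_abs_cont {u : ℂ} (hu : Complex.abs u < 1) :
    Continuous fun θ : ℝ => Real.log (Complex.abs (1 - u * Complex.exp (θ * Complex.I))) := by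
  have : (fun θ : ℝ => Real.log (Complex.abs (1 - u * Complex.exp (θ * Complex.I))))
      = fun θ : ℝ => (Complex.log (1 - u * Complex.exp (θ * Complex.I))).re := by
    funext θ; rw [Complex.log_re, Complex.abs_apply']
  rw [this]
  exact Complex.continuous_re.comp (log_cont hu)

lemma one_sub_ne {u : ℂ} (hu : Complex.abs u < 1) (θ : ℝ) :
    Complex.abs (1 - u * Complex.exp (θ * Complex.I)) ≠ 0 := by
  rw [ne_eq, map_eq_zero, sub_eq_zero]
  intro h
  have : Complex.abs (u * Complex.exp (θ * Complex.I)) = 1 := by rw [← h]; simp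
  rw [map_mul, Complex.abs_exp_ofReal_mul_I, mul_one] at this
  rw [this] at hu; exact lt_irrefl _ hu

/-- the "smooth" part of the circle identity -/
lemma smooth_avg {u : ℂ} (hu : Complex.abs u < 1) (c : ℝ) :
    ∫ θ in (0:ℝ)..(2*π), (Real.log c + Real.log (Complex.abs (1 - u * Complex.exp (θ * Complex.I))))
      = 2*π*Real.log c := by
  rw [intervalIntegral.integral_add intervalIntegrable_const
    ((log_abs_cont hu).intervalIntegrable _ _)]
  rw [core_circle_avg hu, intervalIntegral.integral_const, add_zero, smul_eq_mul, sub_zero]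

lemma circle_id (r : ℝ) (hr : 0 < r) (w : ℂ) :
    ∫ θ in (0:ℝ)..(2*π), Real.log (Complex.abs ((r:ℂ) * Complex.exp (θ * Complex.I) - w))
      = 2*π*Real.log (max r (Complex.abs w)) := by
  have hrC : (r:ℂ) ≠ 0 := by exact_mod_cast ne_of_gt hr
  rcases lt_trichotomy (Complex.abs w) r with hlt | heq | hgt
  · -- |w| < r
    set u : ℂ := (starRingEnd ℂ) w / r with hu
    have huabs : Complex.abs u < 1 := by
      rw [hu, map_div₀, Complex.abs_conj, Complex.abs_ofReal, abs_of_pos hr]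
      rw [div_lt_one hr]; exact hlt
    have hpoint : ∀ θ : ℝ, Complex.abs ((r:ℂ) * Complex.exp (θ * Complex.I) - w)
        = r * Complex.abs (1 - u * Complex.exp (θ * Complex.I)) := by
      intro θ
      have hee : Complex.exp (θ * Complex.I) * Complex.exp (-(θ:ℂ) * Complex.I) = 1 := by
        rw [← Complex.exp_add]; ring_nf; exact Complex.exp_zero
      have h1 : (r:ℂ) * Complex.exp (θ * Complex.I) - w
          = Complex.exp (θ * Complex.I) * ((r:ℂ) - w * Complex.exp (-(θ:ℂ) * Complex.I)) := by
        linear_combination (w : ℂ) * hee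
      have h2 : Complex.abs ((r:ℂ) - w * Complex.exp (-(θ:ℂ) * Complex.I))
          = Complex.abs ((r:ℂ) - (starRingEnd ℂ) w * Complex.exp (θ * Complex.I)) := by
        rw [← Complex.abs_conj ((r:ℂ) - w * Complex.exp (-(θ:ℂ) * Complex.I))]
        congr 1
        rw [map_sub, map_mul, ← Complex.exp_conj]
        congr 2
        · exact Complex.conj_ofReal r
        · simp [map_mul, Complex.conj_ofReal, Complex.conj_I]
      have h3 : (r:ℂ) - (starRingEnd ℂ) w * Complex.exp (θ * Complex.I)
          = (r:ℂ) * (1 - u * Complex.exp (θ * Complex.I)) := by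
        rw [hu]; field_simp
      rw [h1, map_mul, Complex.abs_exp_ofReal_mul_I, one_mul, h2, h3, map_mul,
        Complex.abs_ofReal, abs_of_pos hr]
    have hcong : ∀ θ : ℝ, Real.log (Complex.abs ((r:ℂ) * Complex.exp (θ * Complex.I) - w))
        = Real.log r + Real.log (Complex.abs (1 - u * Complex.exp (θ * Complex.I))) := by
      intro θ
      rw [hpoint θ, Real.log_mul (ne_of_gt hr) (one_sub_ne huabs θ)]
    rw [intervalIntegral.integral_congr (g := fun θ =>
      Real.log r + Real.log (Complex.abs (1 - u * Complex.exp (θ * Complex.I))))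
      (fun θ _ => hcong θ)]
    rw [smooth_avg huabs r, max_eq_left hlt.le]
  · -- |w| = r
    have hw0 : w ≠ 0 := by
      intro h; rw [h, map_zero] at heq; exact ne_of_gt hr heq.symm
    set φ : ℝ := Complex.arg w with hφ
    have hwr : w = (r:ℂ) * Complex.exp (φ * Complex.I) := by
      rw [hφ, ← heq]
      exact (Complex.abs_mul_exp_arg_mul_I w).symm
    have hpoint : ∀ θ : ℝ, Complex.abs ((r:ℂ) * Complex.exp (θ * Complex.I) - w)
        = r * Complex.abs (1 - Complex.exp ((θ - φ : ℝ) * Complex.I)) := by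
      intro θ
      have hee : Complex.exp (φ * Complex.I) * Complex.exp ((θ - φ : ℝ) * Complex.I)
          = Complex.exp (θ * Complex.I) := by
        rw [← Complex.exp_add]; congr 1; push_cast; ring
      have h1 : (r:ℂ) * Complex.exp (θ * Complex.I) - w
          = ((r:ℂ) * Complex.exp (φ * Complex.I)) * (Complex.exp ((θ - φ : ℝ) * Complex.I) - 1) := by
        rw [hwr]; linear_combination (-(r:ℂ)) * hee
      rw [h1, map_mul, map_mul, Complex.abs_exp_ofReal_mul_I, mul_one, Complex.abs_ofReal,
        abs_of_pos hr, ← AbsoluteValue.map_sub Complex.abs 1]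
    -- a.e. rewrite to log r + Gf (θ - φ)
    have hnull : volume {θ : ℝ | Complex.exp ((θ - φ : ℝ) * Complex.I) = 1} = 0 := by
      apply Set.Countable.measure_zero
      apply Set.Countable.mono ?_ (Set.countable_range (fun n : ℤ => φ + n * (2*π)))
      intro θ hθ
      simp only [Set.mem_setOf_eq] at hθ
      rw [Complex.exp_eq_one_iff] at hθ
      obtain ⟨n, hn⟩ := hθ
      refine ⟨n, ?_⟩
      have h2 : ((θ - φ : ℝ) : ℂ) * Complex.I = ((n:ℂ) * (2*(π:ℂ))) * Complex.I := by
        rw [hn]; ring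
      have h3 := mul_right_cancel₀ Complex.I_ne_zero h2
      have h4 : θ - φ = (n:ℝ) * (2*π) := by exact_mod_cast h3
      show φ + (n:ℝ) * (2*π) = θ
      linarith
    have hcong : ∫ θ in (0:ℝ)..(2*π), Real.log (Complex.abs ((r:ℂ) * Complex.exp (θ * Complex.I) - w))
        = ∫ θ in (0:ℝ)..(2*π), (Real.log r + Gf (θ - φ)) := by
      apply intervalIntegral.integral_congr_ae
      rw [Filter.eventually_iff, mem_ae_iff]
      apply measure_mono_null ?_ hnull
      intro θ hθ
      simp only [Set.mem_compl_iff, Set.mem_setOf_eq, Classical.not_imp] at hθ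
      obtain ⟨_, hne⟩ := hθ
      simp only [Set.mem_setOf_eq]
      by_contra hexp
      apply hne
      have hX : Complex.abs (1 - Complex.exp ((θ - φ : ℝ) * Complex.I)) ≠ 0 := by
        rw [ne_eq, map_eq_zero, sub_eq_zero]
        intro h; exact hexp h.symm
      rw [hpoint θ, Real.log_mul (ne_of_gt hr) hX]
      rfl
    rw [hcong]
    have hGfii : IntervalIntegrable (fun θ => Gf (θ - φ)) volume 0 (2*π) := by
      have := (Gf_ii_all (-φ) (2*π - φ)).comp_sub_right φ
      simpa [show -φ + φ = 0 by ring, show 2*π - φ + φ = 2*π by ring] using this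
    rw [intervalIntegral.integral_add intervalIntegrable_const hGfii]
    have hshift : ∫ θ in (0:ℝ)..(2*π), Gf (θ - φ) = 0 := by
      rw [intervalIntegral.integral_comp_sub_right Gf φ]
      have h0 : (0:ℝ) - φ = -φ := by ring
      have h1 : 2*π - φ = -φ + 2*π := by ring
      rw [h0, h1, Gf_per.intervalIntegral_add_eq (-φ) 0]
      simpa using Gf_val
    rw [hshift, intervalIntegral.integral_const, heq, max_self, add_zero, smul_eq_mul, sub_zero]
  · -- r < |w|
    have hw0 : w ≠ 0 := by
      intro h; rw [h, map_zero] at hgt; linarith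
    set u : ℂ := (r:ℂ) / w with hu
    have huabs : Complex.abs u < 1 := by
      rw [hu, map_div₀, Complex.abs_ofReal, abs_of_pos hr, div_lt_one (hr.trans hgt)]
      exact hgt
    have hpoint : ∀ θ : ℝ, Complex.abs ((r:ℂ) * Complex.exp (θ * Complex.I) - w)
        = Complex.abs w * Complex.abs (1 - u * Complex.exp (θ * Complex.I)) := by
      intro θ
      have h1 : (r:ℂ) * Complex.exp (θ * Complex.I) - w
          = (-w) * (1 - u * Complex.exp (θ * Complex.I)) := by
        rw [hu]; field_simp; ring
      rw [h1, map_mul, map_neg_eq_map]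
    have hcong : ∀ θ : ℝ, Real.log (Complex.abs ((r:ℂ) * Complex.exp (θ * Complex.I) - w))
        = Real.log (Complex.abs w) + Real.log (Complex.abs (1 - u * Complex.exp (θ * Complex.I))) := by
      intro θ
      rw [hpoint θ, Real.log_mul (ne_of_gt (hr.trans hgt)) (one_sub_ne huabs θ)]
    rw [intervalIntegral.integral_congr (g := fun θ =>
      Real.log (Complex.abs w) + Real.log (Complex.abs (1 - u * Complex.exp (θ * Complex.I))))
      (fun θ _ => hcong θ)]
    rw [smooth_avg huabs, max_eq_right hgt.le]

section Pot
variable (ν : Measure ℂ) [IsProbabilityMeasure ν]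
  (hrad : ∀ θ : ℝ, Measure.map (fun w => Complex.exp (θ * Complex.I) * w) ν = ν)

lemma meas_logabs (z : ℂ) : Measurable (fun w : ℂ => Real.log ‖z - w‖) :=
  Real.measurable_log.comp (Complex.continuous_abs.measurable.comp
    (measurable_const.sub measurable_id))

include hrad in
lemma logPot_rot (θ : ℝ) (z : ℂ) :
    logPot ν (Complex.exp (θ * Complex.I) * z) = logPot ν z := by
  unfold logPot
  conv_lhs => rw [← hrad θ]
  rw [integral_map (by fun_prop) ((meas_logabs _).aestronglyMeasurable)]
  congr 1
  funext w
  congr 1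
  rw [← mul_sub, norm_mul, Complex.norm_exp_ofReal_mul_I, one_mul]

include hrad in
lemma lint_rot (θ : ℝ) (r : ℝ) :
    ∫⁻ w, ‖Real.log (Complex.abs ((r:ℂ) * Complex.exp (θ * Complex.I) - w))‖₊ ∂ν
      = ∫⁻ w, ‖Real.log (Complex.abs ((r:ℂ) - w))‖₊ ∂ν := by
  conv_lhs => rw [← hrad θ]
  rw [lintegral_map (by
    refine Measurable.coe_nnreal_ennreal (Measurable.nnnorm ?_)
    exact meas_logabs _) (by fun_prop)]
  congr 1
  funext w
  congr 2
  rw [show (r:ℂ) * Complex.exp (θ * Complex.I) - Complex.exp (θ * Complex.I) * w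
      = Complex.exp (θ * Complex.I) * ((r:ℂ) - w) by ring, map_mul,
    Complex.abs_exp_ofReal_mul_I, one_mul]

include hrad in
lemma logPot_radial (hint : ∀ z : ℂ, Integrable (fun w => Real.log (Complex.abs (z - w))) ν)
    (r : ℝ) (hr : 0 < r) :
    (2*π) * logPot ν ((r:ℂ)) = (2*π) * ∫ w, Real.log (max r (Complex.abs w)) ∂ν := by
  have hpi : 0 < π := Real.pi_pos
  set μθ : Measure ℝ := volume.restrict (Set.Ioc (0:ℝ) (2*π)) with hμθ
  have hμθu : μθ Set.univ = ENNReal.ofReal (2*π) := by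
    rw [hμθ, Measure.restrict_apply_univ, Real.volume_Ioc, sub_zero]
  -- Step A : the θ-integral of the constant function logPot ν r
  have hA : ∫ θ, logPot ν ((r:ℂ) * Complex.exp (θ * Complex.I)) ∂μθ = (2*π) * logPot ν (r:ℂ) := by
    have hconst : ∀ θ : ℝ, logPot ν ((r:ℂ) * Complex.exp (θ * Complex.I)) = logPot ν (r:ℂ) := by
      intro θ
      rw [mul_comm]
      exact logPot_rot ν hrad θ (r:ℂ)
    rw [integral_congr_ae (Filter.Eventually.of_forall hconst), MeasureTheory.integral_const, measureReal_def, hμθu,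
      ENNReal.toReal_ofReal (by linarith), smul_eq_mul]
  -- Step B : Fubini
  have hBint : Integrable (Function.uncurry
      (fun (θ : ℝ) (w : ℂ) => Real.log (Complex.abs ((r:ℂ) * Complex.exp (θ * Complex.I) - w))))
      (μθ.prod ν) := by
    constructor
    · apply Measurable.aestronglyMeasurable
      apply Real.measurable_log.comp
      apply Complex.continuous_abs.measurable.comp
      exact ((by fun_prop : Continuous (fun p : ℝ × ℂ => (r:ℂ) * Complex.exp (p.1 * Complex.I))).measurable).sub measurable_snd
    · show (∫⁻ p : ℝ × ℂ, ‖Real.log (Complex.abs ((r:ℂ) * Complex.exp (p.1 * Complex.I) - p.2))‖₊ ∂(μθ.prod ν)) < ⊤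
      rw [lintegral_prod _ (by
        apply Measurable.aemeasurable
        refine Measurable.coe_nnreal_ennreal (Measurable.nnnorm ?_)
        apply Real.measurable_log.comp
        apply Complex.continuous_abs.measurable.comp
        exact ((by fun_prop : Continuous (fun p : ℝ × ℂ => (r:ℂ) * Complex.exp (p.1 * Complex.I))).measurable).sub measurable_snd)]
      have hinner : ∀ θ : ℝ, ∫⁻ w, ‖Real.log (Complex.abs ((r:ℂ) * Complex.exp (θ * Complex.I) - w))‖₊ ∂ν
          = ∫⁻ w, ‖Real.log (Complex.abs ((r:ℂ) - w))‖₊ ∂ν := fun θ => lint_rot ν hrad θ r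
      rw [lintegral_congr hinner, lintegral_const]
      have hC : ∫⁻ w, ‖Real.log (Complex.abs ((r:ℂ) - w))‖₊ ∂ν < ⊤ := (hint (r:ℂ)).2
      exact ENNReal.mul_lt_top hC (by rw [hμθu]; exact ENNReal.ofReal_lt_top)
  have hB := integral_integral_swap hBint
  -- Step C : inner θ-integral via the circle identity
  have hC : ∀ w : ℂ, ∫ θ, Real.log (Complex.abs ((r:ℂ) * Complex.exp (θ * Complex.I) - w)) ∂μθ
      = 2*π*Real.log (max r (Complex.abs w)) := by
    intro w
    rw [hμθ, ← intervalIntegral.integral_of_le (by linarith : (0:ℝ) ≤ 2*π)]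
    exact circle_id r hr w
  -- combine
  have hAB : ∫ θ, logPot ν ((r:ℂ) * Complex.exp (θ * Complex.I)) ∂μθ
      = ∫ w, (2*π*Real.log (max r (Complex.abs w))) ∂ν := by
    calc ∫ θ, logPot ν ((r:ℂ) * Complex.exp (θ * Complex.I)) ∂μθ
        = ∫ θ, (∫ w, Real.log (Complex.abs ((r:ℂ) * Complex.exp (θ * Complex.I) - w)) ∂ν) ∂μθ := rfl
      _ = ∫ w, (∫ θ, Real.log (Complex.abs ((r:ℂ) * Complex.exp (θ * Complex.I) - w)) ∂μθ) ∂ν := hB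
      _ = ∫ w, (2*π*Real.log (max r (Complex.abs w))) ∂ν := by
          exact integral_congr_ae (Filter.Eventually.of_forall hC)
  rw [← hA, hAB, MeasureTheory.integral_const_mul]
end Pot

/-- Let `α > 0`, `p ∈ [0,1)`, and `q ∈ (1, α)` satisfy `q(log q − 1) = p(log p − 1)`.
For any radially symmetric, compactly supported probability measure `ν` on `ℂ` with
`ν(D) ≤ p/α` (where `D` is the open unit disk), setting
`B_α(ν) = 2 sup_w {U_ν(w) − |w|²/(2α)}` and `g_ν(z) = U_ν(z) − |z|²/(2α) − B_α(ν)/2`,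
for every `z` with `|z| = 1` we have `g_ν(z) ≤ q(1 − log q)/(2α) − 1/(2α)`. -/
theorem gfun_bound_on_unit_circle (α p q : ℝ) (hα : 0 < α)
    (hp : p ∈ Set.Ico (0 : ℝ) 1) (hq : q ∈ Set.Ioo 1 α)
    (hrel : q * (Real.log q - 1) = p * (Real.log p - 1))
    (ν : Measure ℂ) [IsProbabilityMeasure ν]
    (hcomp : ∃ R : ℝ, ν (Metric.closedBall 0 R)ᶜ = 0)
    (hrad : ∀ θ : ℝ, Measure.map (fun w => Complex.exp (θ * Complex.I) * w) ν = ν)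
    (hint : ∀ z : ℂ, Integrable (fun w => Real.log ‖z - w‖) ν)
    (hmass : ν (Metric.ball (0 : ℂ) 1) ≤ ENNReal.ofReal (p / α)) :
    ∀ z : ℂ, ‖z‖ = 1 →
      logPot ν z - ‖z‖ ^ 2 / (2 * α) -
          (2 * ⨆ w : ℂ, (logPot ν w - ‖w‖ ^ 2 / (2 * α))) / 2 ≤
        q * (1 - Real.log q) / (2 * α) - 1 / (2 * α) := by
  intro z hz
  have hπ : 0 < π := Real.pi_pos
  obtain ⟨R, hR⟩ := hcomp
  set R0 : ℝ := max R 1 with hR0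
  have hR01 : 1 ≤ R0 := le_max_right _ _
  have haebd : ∀ᵐ w ∂ν, Complex.abs w ≤ R0 := by
    rw [ae_iff]
    apply measure_mono_null ?_ hR
    intro w hw
    simp only [Set.mem_setOf_eq, not_le] at hw
    simp only [Set.mem_compl_iff, Metric.mem_closedBall, Complex.dist_eq, sub_zero, not_le]
    calc R ≤ R0 := le_max_left _ _
    _ < Complex.abs w := hw
  -- integrability of log max
  have hlogmax_int : ∀ r : ℝ, 0 < r → Integrable (fun w => Real.log (max r (Complex.abs w))) ν := by
    intro r hr
    refine ⟨(Real.measurable_log.comp (measurable_const.max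
      Complex.continuous_abs.measurable)).aestronglyMeasurable, ?_⟩
    apply HasFiniteIntegral.of_bounded (C := |Real.log r| + |Real.log (max r R0)|)
    filter_upwards [haebd] with w hw
    rw [Real.norm_eq_abs, abs_le]
    have h1 : Real.log r ≤ Real.log (max r (Complex.abs w)) :=
      Real.log_le_log hr (le_max_left _ _)
    have h2 : Real.log (max r (Complex.abs w)) ≤ Real.log (max r R0) := by
      apply Real.log_le_log (lt_max_of_lt_left hr)
      apply max_le (le_max_left _ _)
      exact le_trans hw (le_max_right _ _)
    constructor
    · have := neg_abs_le (Real.log r)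
      have := abs_nonneg (Real.log (max r R0))
      linarith
    · have := le_abs_self (Real.log (max r R0))
      have := abs_nonneg (Real.log r)
      linarith
  -- identity logPot at radius r
  have hradial : ∀ r : ℝ, 0 < r →
      logPot ν ((r:ℂ)) = ∫ w, Real.log (max r (Complex.abs w)) ∂ν := by
    intro r hr
    have := logPot_radial ν hrad hint r hr
    exact mul_left_cancel₀ (by positivity) this
  -- logPot constant on circles
  have habs_z : Complex.abs z = 1 := by rwa [← Complex.norm_eq_abs]
  have hz1 : logPot ν z = logPot ν ((1:ℝ):ℂ) := by
    have h := Complex.abs_mul_exp_arg_mul_I z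
    rw [habs_z] at h
    push_cast at h
    rw [one_mul] at h
    calc logPot ν z = logPot ν (Complex.exp (Complex.arg z * Complex.I) * 1) := by
          rw [mul_one, h]
      _ = logPot ν 1 := logPot_rot ν hrad (Complex.arg z) 1
      _ = logPot ν ((1:ℝ):ℂ) := by norm_num
  -- upper bound on logPot, for BddAbove
  have hpot_le : ∀ w : ℂ, logPot ν w ≤ Real.log (Complex.abs w + R0) := by
    intro w
    have hpos : 0 < Complex.abs w + R0 := by
      have := AbsoluteValue.nonneg Complex.abs w; linarith
    have hb : ∀ᵐ w' ∂ν, Real.log (Complex.abs (w - w')) ≤ Real.log (Complex.abs w + R0) := by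
      filter_upwards [haebd] with w' hw'
      have habsn := AbsoluteValue.nonneg Complex.abs w
      rcases eq_or_lt_of_le (AbsoluteValue.nonneg Complex.abs (w - w')) with h0 | h0
      · rw [← h0, Real.log_zero]
        exact Real.log_nonneg (by linarith)
      · apply Real.log_le_log h0
        calc Complex.abs (w - w') ≤ Complex.abs w + Complex.abs w' := by
              exact norm_sub_le w w'
        _ ≤ Complex.abs w + R0 := by linarith
    calc logPot ν w ≤ ∫ _w', Real.log (Complex.abs w + R0) ∂ν :=
          integral_mono_ae (hint w) (integrable_const _) hb
      _ = Real.log (Complex.abs w + R0) := by simp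
  have hbdd : BddAbove (Set.range (fun w : ℂ => logPot ν w - ‖w‖ ^ 2 / (2 * α))) := by
    refine ⟨R0 + α/2, ?_⟩
    rintro x ⟨w, rfl⟩
    have h1 : logPot ν w ≤ Real.log (Complex.abs w + R0) := hpot_le w
    have hpos : 0 < Complex.abs w + R0 := by
      have := AbsoluteValue.nonneg Complex.abs w; linarith
    have h2 : Real.log (Complex.abs w + R0) ≤ Complex.abs w + R0 - 1 :=
      Real.log_le_sub_one_of_pos hpos
    have h3 : ‖w‖ = Complex.abs w := Complex.norm_eq_abs w
    have h4 : Complex.abs w - (Complex.abs w)^2/(2*α) ≤ α/2 := by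
      have h2α : (0:ℝ) < 2*α := by linarith
      rw [sub_le_comm, le_div_iff₀ h2α]
      nlinarith [sq_nonneg (Complex.abs w - α)]
    simp only []
    rw [h3]
    linarith [h1, h2, h4]
  set S : ℝ := ⨆ w : ℂ, (logPot ν w - ‖w‖ ^ 2 / (2 * α)) with hS
  have hsup : ∀ w : ℂ, logPot ν w - ‖w‖ ^ 2 / (2 * α) ≤ S := fun w => le_ciSup hbdd w
  have hmass' : (ν (Metric.ball (0:ℂ) 1)).toReal ≤ p / α := by
    have := ENNReal.toReal_mono (by simp) hmass
    rwa [ENNReal.toReal_ofReal (div_nonneg hp.1 hα.le)] at this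
  rw [hz, one_pow]
  rw [show (2 * S)/2 = S by ring]
  rcases eq_or_lt_of_le hp.1 with hp0 | hp0
  · -- p = 0
    have hq0 : q * (1 - Real.log q) = 0 := by
      have : q * (Real.log q - 1) = 0 := by rw [hrel, ← hp0]; ring
      linarith [this]
    rw [hq0]
    have hball0 : ν (Metric.ball (0:ℂ) 1) = 0 := by
      rw [← hp0] at hmass
      simpa using hmass
    have haeout : ∀ᵐ w ∂ν, 1 ≤ Complex.abs w := by
      rw [ae_iff]
      apply measure_mono_null ?_ hball0
      intro w hw
      simp only [Set.mem_setOf_eq, not_le] at hw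
      simpa [Complex.dist_eq] using hw
    have h00 : logPot ν 0 = ∫ w, Real.log (max 1 (Complex.abs w)) ∂ν := by
      unfold logPot
      apply MeasureTheory.integral_congr_ae
      filter_upwards [haeout] with w hw
      rw [zero_sub, norm_neg, max_eq_right hw, Complex.abs_apply']
    have hF0 : logPot ν 0 - ‖(0:ℂ)‖^2/(2*α) ≤ S := hsup 0
    have h1eq : logPot ν ((1:ℝ):ℂ) = ∫ w, Real.log (max 1 (Complex.abs w)) ∂ν :=
      hradial 1 one_pos
    rw [hz1, h1eq]
    simp only [norm_zero] at hF0
    rw [h00] at hF0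
    have : (0:ℝ)^2/(2*α) = 0 := by norm_num
    rw [this, sub_zero] at hF0
    linarith
  · -- 0 < p < 1
    set r : ℝ := Real.sqrt p with hr
    have hr0 : 0 < r := Real.sqrt_pos.2 hp0
    have hr1 : r < 1 := by
      rw [hr, show (1:ℝ) = Real.sqrt 1 by simp]
      exact Real.sqrt_lt_sqrt hp.1 hp.2
    have hrsq : r^2 = p := Real.sq_sqrt hp.1
    have hlogr : Real.log r = Real.log p / 2 := Real.log_sqrt hp.1
    -- difference of potentials
    have hdiff : (∫ w, Real.log (max 1 (Complex.abs w)) ∂ν)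
        - (∫ w, Real.log (max r (Complex.abs w)) ∂ν)
        ≤ (- Real.log r) * (p/α) := by
      have hind : Integrable ((Metric.ball (0:ℂ) 1).indicator
          (fun _ => - Real.log r)) ν :=
        (integrable_const _).indicator Metric.isOpen_ball.measurableSet
      have hsub : Integrable (fun w => Real.log (max 1 (Complex.abs w))
          - Real.log (max r (Complex.abs w))) ν :=
        (hlogmax_int 1 one_pos).sub (hlogmax_int r hr0)
      have hmono : ∀ w : ℂ, Real.log (max 1 (Complex.abs w)) - Real.log (max r (Complex.abs w))
          ≤ (Metric.ball (0:ℂ) 1).indicator (fun _ => - Real.log r) w := by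
        intro w
        rcases lt_or_ge (Complex.abs w) 1 with hw | hw
        · rw [Set.indicator_of_mem (by simpa [Complex.dist_eq] using hw)]
          rw [max_eq_left hw.le, Real.log_one]
          have : Real.log r ≤ Real.log (max r (Complex.abs w)) :=
            Real.log_le_log hr0 (le_max_left _ _)
          linarith
        · rw [Set.indicator_of_notMem (by simpa [Complex.dist_eq] using not_lt.mpr hw)]
          rw [max_eq_right hw, max_eq_right (le_trans hr1.le hw)]
          simp
      have h1 : ∫ w, (Real.log (max 1 (Complex.abs w)) - Real.log (max r (Complex.abs w))) ∂ν
          ≤ ∫ w, (Metric.ball (0:ℂ) 1).indicator (fun _ => - Real.log r) w ∂ν :=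
        integral_mono_ae hsub hind (Filter.Eventually.of_forall hmono)
      rw [integral_sub (hlogmax_int 1 one_pos) (hlogmax_int r hr0)] at h1
      rw [integral_indicator_const _ Metric.isOpen_ball.measurableSet] at h1
      have hlogr_nonneg : 0 ≤ - Real.log r :=
        neg_nonneg.mpr (Real.log_nonpos hr0.le hr1.le)
      calc (∫ w, Real.log (max 1 (Complex.abs w)) ∂ν)
            - (∫ w, Real.log (max r (Complex.abs w)) ∂ν)
          ≤ (ν (Metric.ball (0:ℂ) 1)).toReal • (- Real.log r) := h1
        _ = (ν (Metric.ball (0:ℂ) 1)).toReal * (- Real.log r) := by rw [smul_eq_mul]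
        _ ≤ (p/α) * (- Real.log r) := by
            apply mul_le_mul_of_nonneg_right hmass' hlogr_nonneg
        _ = (- Real.log r) * (p/α) := by ring
    -- sup bound at r
    have hFr : logPot ν ((r:ℝ):ℂ) - ‖((r:ℝ):ℂ)‖^2/(2*α) ≤ S := hsup _
    have hnr : ‖((r:ℝ):ℂ)‖^2 = p := by
      rw [Complex.norm_real, Real.norm_eq_abs, _root_.abs_of_nonneg hr0.le, hrsq]
    rw [hnr, hradial r hr0] at hFr
    rw [hz1, hradial 1 one_pos]
    -- final arithmetic
    have hq_eq : q * (1 - Real.log q) = p * (1 - Real.log p) := by linarith [hrel]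
    rw [hq_eq]
    have hfinal : (- Real.log r) * (p/α) + p/(2*α) - 1/(2*α)
        = p * (1 - Real.log p) / (2*α) - 1/(2*α) := by
      rw [hlogr]
      field_simp
      ring
    linarith [hdiff, hFr]
end
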